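/- Let A = (Q, ι, δ, F) be an NBA over a finite alphabet Σ, let D be a DAC of A, let w : ℕ → Σ be an infinite word, and consider the sequence of level-labelling functions (g_ℓ) of the DAC construction for D with its colors (c_ℓ). Then there exists an accepting run of A over w that eventually stays in D (i.e., ∃N ∈ ℕ with ρ(n) ∈ D for all n ≥ N) if and only if the minimal color occurring infinitely often in the sequence (c_ℓ) is even. -/
import Mathlib


open scoped Classical

/-- A nondeterministic Büchi automaton with state type `Q` and alphabet `A`:
an initial state, a transition relation (given as `trans : Q → A → Set Q`),
and a set `acc` of accepting transitions, which must be transitions of the automaton. -/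
structure NBA (Q A : Type) where
  init : Q
  trans : Q → A → Set Q
  acc : Set (Q × A × Q)
  acc_sub : ∀ t ∈ acc, t.2.2 ∈ trans t.1 t.2.1

namespace NBA

variable {Q A : Type}

/-- `ρ` is a run of the NBA `M` over the infinite word `w`. -/
def IsRun (M : NBA Q A) (w : ℕ → A) (ρ : ℕ → Q) : Prop :=
  ρ 0 = M.init ∧ ∀ ℓ : ℕ, ρ (ℓ + 1) ∈ M.trans (ρ ℓ) (w ℓ)

/-- `ρ` is an accepting run of `M` over `w`: a run taking accepting transitions
infinitely often. -/
def IsAcceptingRun (M : NBA Q A) (w : ℕ → A) (ρ : ℕ → Q) : Prop :=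
  M.IsRun w ρ ∧ ∀ n : ℕ, ∃ ℓ ≥ n, (ρ ℓ, w ℓ, ρ (ℓ + 1)) ∈ M.acc

/-- `w` is in the language of `M`. -/
def InLanguage (M : NBA Q A) (w : ℕ → A) : Prop :=
  ∃ ρ : ℕ → Q, M.IsAcceptingRun w ρ

/-- `q'` is reachable from `q` (via a finite, possibly empty, word). -/
def Reach (M : NBA Q A) : Q → Q → Prop :=
  Relation.ReflTransGen fun q q' => ∃ a : A, q' ∈ M.trans q a

/-- `C` is a strongly connected component: any two of its states are mutually
reachable, and it is maximal with this property. -/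
def IsSCC (M : NBA Q A) (C : Set Q) : Prop :=
  (∀ q ∈ C, ∀ q' ∈ C, M.Reach q q' ∧ M.Reach q' q) ∧
  ∀ C' : Set Q, C ⊆ C' → (∀ q ∈ C', ∀ q' ∈ C', M.Reach q q' ∧ M.Reach q' q) → C' = C

/-- An SCC is accepting if it contains an accepting transition. -/
def AccSCC (M : NBA Q A) (C : Set Q) : Prop :=
  ∃ q ∈ C, ∃ a : A, ∃ q' ∈ C, (q, a, q') ∈ M.acc

/-- A cycle through `C`: a nonempty finite sequence of transitions within
`C × A × C` starting and ending at the same state. -/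
def IsCycle (M : NBA Q A) (C : Set Q) (n : ℕ) (p : ℕ → Q) (u : ℕ → A) : Prop :=
  1 ≤ n ∧ p n = p 0 ∧ ∀ i < n, p i ∈ C ∧ p (i + 1) ∈ C ∧ p (i + 1) ∈ M.trans (p i) (u i)

/-- The cycle visits an accepting transition. -/
def CycleHasAcc (M : NBA Q A) (n : ℕ) (p : ℕ → Q) (u : ℕ → A) : Prop :=
  ∃ i < n, (p i, u i, p (i + 1)) ∈ M.acc

/-- `C` is inherently weak: either every cycle through `C` contains an accepting
transition, or no cycle through `C` does. -/
def InherentlyWeak (M : NBA Q A) (C : Set Q) : Prop :=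
  (∀ n p u, M.IsCycle C n p u → M.CycleHasAcc n p u) ∨
  (∀ n p u, M.IsCycle C n p u → ¬ M.CycleHasAcc n p u)

/-- `δ(S, a)`, the set of successors of states of `S` under letter `a`. -/
def stepSet (M : NBA Q A) (S : Set Q) (a : A) : Set Q :=
  {q' | ∃ q ∈ S, q' ∈ M.trans q a}

/-- `S_ℓ`: the set of states reached at level `ℓ` of the run DAG of `M` over `w`. -/
def reachSet (M : NBA Q A) (w : ℕ → A) : ℕ → Set Q
  | 0 => {M.init}
  | ℓ + 1 => M.stepSet (M.reachSet w ℓ) (w ℓ)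

/-- `W`: the union of the inherently weak SCCs. -/
def weakStates (M : NBA Q A) : Set Q :=
  {q | ∃ C : Set Q, M.IsSCC C ∧ M.InherentlyWeak C ∧ q ∈ C}

/-- `WA`: the union of the accepting inherently weak SCCs. -/
def weakAccStates (M : NBA Q A) : Set Q :=
  {q | ∃ C : Set Q, M.IsSCC C ∧ M.InherentlyWeak C ∧ M.AccSCC C ∧ q ∈ C}

/-- The sequence `(P_ℓ, O_ℓ)` of the inherently-weak-SCC construction of `M` over `w`. -/
noncomputable def weakSeq (M : NBA Q A) (w : ℕ → A) : ℕ → Set Q × Set Q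
  | 0 => ({M.init} ∩ M.weakStates, ∅)
  | ℓ + 1 =>
      (M.reachSet w (ℓ + 1) ∩ M.weakStates,
        if (M.weakSeq w ℓ).2 = ∅ then
          (M.reachSet w (ℓ + 1) ∩ M.weakStates) ∩ M.weakAccStates
        else M.stepSet (M.weakSeq w ℓ).2 (w ℓ) ∩ M.weakAccStates)

end NBA

namespace NBA

variable {Q A : Type}

/-- An SCC `C` is deterministic if every state has at most one `a`-successor inside `C`. -/
def IsDeterministicSCC (M : NBA Q A) (C : Set Q) : Prop :=
  ∀ q ∈ C, ∀ a : A, (M.trans q a ∩ C).Subsingleton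

/-- A DAC: an accepting SCC that is deterministic and not inherently weak. -/
def IsDAC (M : NBA Q A) (C : Set Q) : Prop :=
  M.IsSCC C ∧ M.AccSCC C ∧ M.IsDeterministicSCC C ∧ ¬ M.InherentlyWeak C

/-- `δ_D(S ∩ D, a)`: the states of `D` reached from `S ∩ D` by an `a`-transition inside `D`. -/
def dacImage (M : NBA Q A) (D S : Set Q) (a : A) : Set Q :=
  {q' ∈ D | ∃ q ∈ S ∩ D, q' ∈ M.trans q a}

/-- The intermediate level-labelling `g'` of the DAC construction: states reached
inside `D` inherit the minimum label of their predecessors, newly entering states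
(in the order `≼` on `Q`) get labels `|D| + 1, |D| + 2, …`, and all other states
get `∞`. Here `S` and `S'` are the sets of states reached at the current and next
levels of the run DAG. -/
noncomputable def dacPrime [LinearOrder Q] (M : NBA Q A) (D : Set Q)
    (S S' : Set Q) (a : A) (g : Q → ℕ∞) : Q → ℕ∞ := fun q' =>
  if q' ∈ M.dacImage D S a then
    sInf {v : ℕ∞ | ∃ q ∈ S ∩ D, q' ∈ M.trans q a ∧ g q = v}
  else if q' ∈ (S' ∩ D) \ M.dacImage D S a then
    ((D.ncard + Set.ncard {p | p ∈ (S' ∩ D) \ M.dacImage D S a ∧ p < q'} + 1 : ℕ) : ℕ∞)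
  else ⊤

/-- Rank compression `ord`: each finite label is replaced by its relative position
among the finite labels occurring in the image of `g` on `D`. -/
noncomputable def dacOrd (D : Set Q) (g : Q → ℕ∞) : Q → ℕ∞ := fun q =>
  if g q ≠ ⊤ then
    ((Set.ncard {v : ℕ∞ | v ≤ g q ∧ v ≠ ⊤ ∧ ∃ p ∈ D, g p = v} : ℕ) : ℕ∞)
  else ⊤

/-- The sequence `g_ℓ` of level-labelling functions of the DAC construction for
the DAC `D` of `M` over the word `w`. -/
noncomputable def dacG [LinearOrder Q] (M : NBA Q A) (D : Set Q) (w : ℕ → A) :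
    ℕ → Q → ℕ∞
  | 0 => fun q => if q = M.init ∧ q ∈ D then 1 else ⊤
  | ℓ + 1 =>
      dacOrd D
        (M.dacPrime D (M.reachSet w ℓ) (M.reachSet w (ℓ + 1)) (w ℓ) (M.dacG D w ℓ))

/-- The color `c_ℓ` emitted by the step from level `ℓ` to level `ℓ + 1` of the DAC
construction: with `B(e)` the vanished labels (plus `|D| + 1`) and `G(e)` the labels
witnessing an accepting transition (plus `|D| + 1`), the color is
`min (2 ⬝ min B(e) − 1) (2 ⬝ min G(e))`. -/
noncomputable def dacColor [LinearOrder Q] (M : NBA Q A) (D : Set Q) (w : ℕ → A)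
    (ℓ : ℕ) : ℕ :=
  let g := M.dacG D w ℓ
  let g' := M.dacPrime D (M.reachSet w ℓ) (M.reachSet w (ℓ + 1)) (w ℓ) g
  let B : Set ℕ :=
    insert (D.ncard + 1) {n : ℕ | (∃ q ∈ D, g q = (n : ℕ∞)) ∧ ¬ ∃ q ∈ D, g' q = (n : ℕ∞)}
  let G : Set ℕ :=
    insert (D.ncard + 1)
      {n : ℕ | ∃ q q' : Q, (q, w ℓ, q') ∈ M.acc ∧ g q = (n : ℕ∞) ∧ g' q' = (n : ℕ∞)}
  min (2 * sInf B - 1) (2 * sInf G)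

end NBA
set_option linter.unusedSectionVars false
set_option linter.unusedVariables false

namespace DacAux

variable {Q : Type} [Fintype Q]

/-- The set of finite values attained by `h` on `D`. -/
def Vset (D : Set Q) (h : Q → ℕ∞) : Set ℕ∞ := {v | v ≠ ⊤ ∧ ∃ p ∈ D, h p = v}

/-- The set whose cardinality is the rank of `x`. -/
def rset (D : Set Q) (h : Q → ℕ∞) (x : ℕ∞) : Set ℕ∞ :=
  {v | v ≤ x ∧ v ≠ ⊤ ∧ ∃ p ∈ D, h p = v}

/-- The rank of the value `x`. -/
noncomputable def rk (D : Set Q) (h : Q → ℕ∞) (x : ℕ∞) : ℕ := (rset D h x).ncard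

lemma Vset_finite (D : Set Q) (h : Q → ℕ∞) : (Vset D h).Finite := by
  apply Set.Finite.subset (Set.Finite.image h (Set.toFinite D))
  rintro v ⟨-, p, hp, rfl⟩
  exact ⟨p, hp, rfl⟩

lemma rset_subset_Vset (D : Set Q) (h : Q → ℕ∞) (x : ℕ∞) : rset D h x ⊆ Vset D h :=
  fun v hv => ⟨hv.2.1, hv.2.2⟩

lemma rset_finite (D : Set Q) (h : Q → ℕ∞) (x : ℕ∞) : (rset D h x).Finite :=
  (Vset_finite D h).subset (rset_subset_Vset D h x)

lemma rset_mono (D : Set Q) (h : Q → ℕ∞) {x y : ℕ∞} (hxy : x ≤ y) :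
    rset D h x ⊆ rset D h y := fun v hv => ⟨hv.1.trans hxy, hv.2⟩

lemma rk_mono (D : Set Q) (h : Q → ℕ∞) {x y : ℕ∞} (hxy : x ≤ y) :
    rk D h x ≤ rk D h y :=
  Set.ncard_le_ncard (rset_mono D h hxy) (rset_finite D h y)

lemma mem_rset_self (D : Set Q) (h : Q → ℕ∞) {x : ℕ∞} (hx : x ∈ Vset D h) :
    x ∈ rset D h x := ⟨le_rfl, hx.1, hx.2⟩

lemma rk_pos (D : Set Q) (h : Q → ℕ∞) {x : ℕ∞} (hx : x ∈ Vset D h) :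
    1 ≤ rk D h x := by
  have : (rset D h x).Nonempty := ⟨x, mem_rset_self D h hx⟩
  exact (Set.ncard_pos (rset_finite D h x)).mpr this

lemma rk_strict_mono (D : Set Q) (h : Q → ℕ∞) {x y : ℕ∞} (hxy : x < y)
    (hy : y ∈ Vset D h) : rk D h x < rk D h y := by
  apply Set.ncard_lt_ncard _ (rset_finite D h y)
  constructor
  · exact rset_mono D h hxy.le
  · intro hsub
    have := hsub (mem_rset_self D h hy)
    exact absurd this.1 (not_le_of_gt hxy)

lemma rk_inj_on (D : Set Q) (h : Q → ℕ∞) {x y : ℕ∞} (hx : x ∈ Vset D h)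
    (hy : y ∈ Vset D h) (hr : rk D h x = rk D h y) : x = y := by
  rcases lt_trichotomy x y with hlt | heq | hgt
  · exact absurd hr (Nat.ne_of_lt (rk_strict_mono D h hlt hy))
  · exact heq
  · exact absurd hr.symm (Nat.ne_of_lt (rk_strict_mono D h hgt hx))

/-- A "pre-good" labelling: states with finite label are in `D`, finite labels are
injective, and finite labels are positive naturals. -/
structure PreGood (D : Set Q) (h : Q → ℕ∞) : Prop where
  mem : ∀ q, h q ≠ ⊤ → q ∈ D
  inj : ∀ p q, h p = h q → h p ≠ ⊤ → p = q
  fin : ∀ q, h q ≠ ⊤ → ∃ n : ℕ, 1 ≤ n ∧ h q = (n : ℕ∞)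

/-- A "good" labelling: pre-good and a fixed point of rank compression. -/
structure Good (D : Set Q) (h : Q → ℕ∞) extends PreGood D h : Prop where
  rank : ∀ (q : Q) (n : ℕ), h q = (n : ℕ∞) → rk D h ((n : ℕ∞)) = n

lemma PreGood.rk_le (hP : PreGood D h) {n : ℕ} : rk D h ((n:ℕ∞)) ≤ n := by
  have hsub : rset D h ((n:ℕ∞)) ⊆ (Nat.cast : ℕ → ℕ∞) '' Set.Icc 1 n := by
    rintro v ⟨hvle, hvt, p, hpD, rfl⟩
    obtain ⟨m, hm1, hm⟩ := hP.fin p hvt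
    exact ⟨m, ⟨hm1, by rwa [hm, Nat.cast_le] at hvle⟩, hm.symm⟩
  calc rk D h ((n:ℕ∞)) ≤ ((Nat.cast : ℕ → ℕ∞) '' Set.Icc 1 n).ncard :=
        Set.ncard_le_ncard hsub (((Set.finite_Icc 1 n).image _))
    _ = (Set.Icc 1 n).ncard := Set.ncard_image_of_injective _ Nat.cast_injective
    _ = n := by
        rw [Set.ncard_eq_toFinset_card', Set.toFinset_Icc, Nat.card_Icc]; omega

lemma rk_le_ncard (D : Set Q) (h : Q → ℕ∞) (x : ℕ∞) : rk D h x ≤ D.ncard := by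
  calc rk D h x ≤ (Vset D h).ncard :=
        Set.ncard_le_ncard (rset_subset_Vset D h x) (Vset_finite D h)
    _ ≤ (h '' D).ncard := by
        apply Set.ncard_le_ncard _ ((Set.toFinite D).image h)
        rintro v ⟨-, p, hp, rfl⟩; exact ⟨p, hp, rfl⟩
    _ ≤ D.ncard := Set.ncard_image_le (Set.toFinite D)

lemma Good.val_le (hG : Good D h) {q : Q} {n : ℕ} (hq : h q = (n:ℕ∞)) :
    n ≤ D.ncard := by
  rw [← hG.rank q n hq]; exact rk_le_ncard D h _

end DacAux
namespace DacAux
variable {Q : Type} [Fintype Q]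

lemma dacOrd_eq_top (D : Set Q) (h : Q → ℕ∞) {q : Q} (hq : h q = ⊤) :
    NBA.dacOrd D h q = ⊤ := by simp [NBA.dacOrd, hq]

lemma dacOrd_eq_rk (D : Set Q) (h : Q → ℕ∞) {q : Q} (hq : h q ≠ ⊤) :
    NBA.dacOrd D h q = ((rk D h (h q) : ℕ) : ℕ∞) := by
  simp only [NBA.dacOrd, if_pos hq]
  rfl

lemma dacOrd_top_iff (D : Set Q) (h : Q → ℕ∞) {q : Q} :
    NBA.dacOrd D h q = ⊤ ↔ h q = ⊤ := by
  constructor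
  · intro hq
    by_contra hne
    rw [dacOrd_eq_rk D h hne] at hq
    exact (ENat.coe_ne_top _) hq
  · exact dacOrd_eq_top D h

lemma hval_mem_Vset (D : Set Q) (h : Q → ℕ∞) {q : Q} (hq : h q ≠ ⊤)
    (hqD : q ∈ D) : h q ∈ Vset D h := ⟨hq, q, hqD, rfl⟩

/-- Rank compression of a pre-good labelling is good. -/
lemma Good_dacOrd {D : Set Q} {h : Q → ℕ∞} (hP : PreGood D h) :
    Good D (NBA.dacOrd D h) := by
  have hmem : ∀ q, NBA.dacOrd D h q ≠ ⊤ → q ∈ D := by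
    intro q hq
    exact hP.mem q (fun ht => hq ((dacOrd_top_iff D h).mpr ht))
  have hVs : ∀ q, h q ≠ ⊤ → h q ∈ Vset D h := fun q hq =>
    hval_mem_Vset D h hq (hP.mem q hq)
  -- order reflection
  have hord_le : ∀ p q, h p ≠ ⊤ → h q ≠ ⊤ → rk D h (h p) ≤ rk D h (h q) → h p ≤ h q := by
    intro p q hp hq hle
    by_contra hgt
    push_neg at hgt
    exact absurd hle (Nat.not_le_of_lt (rk_strict_mono D h hgt (hVs p hp)))
  have hinj : ∀ p q, NBA.dacOrd D h p = NBA.dacOrd D h q → NBA.dacOrd D h p ≠ ⊤ → p = q := by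
    intro p q heq hne
    have hp : h p ≠ ⊤ := fun ht => hne ((dacOrd_top_iff D h).mpr ht)
    have hq : h q ≠ ⊤ := by
      intro ht
      rw [heq] at hne
      exact hne ((dacOrd_top_iff D h).mpr ht)
    rw [dacOrd_eq_rk D h hp, dacOrd_eq_rk D h hq] at heq
    have : rk D h (h p) = rk D h (h q) := Nat.cast_injective heq
    have : h p = h q := rk_inj_on D h (hVs p hp) (hVs q hq) this
    exact hP.inj p q this hp
  refine ⟨⟨hmem, hinj, ?_⟩, ?_⟩
  · -- fin
    intro q hq
    have hhq : h q ≠ ⊤ := fun ht => hq ((dacOrd_top_iff D h).mpr ht)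
    refine ⟨rk D h (h q), rk_pos D h (hVs q hhq), dacOrd_eq_rk D h hhq⟩
  · -- rank fixpoint
    intro q n hq
    have hhq : h q ≠ ⊤ := fun ht => by
      rw [dacOrd_eq_top D h ht] at hq; exact (ENat.coe_ne_top n) hq.symm
    rw [dacOrd_eq_rk D h hhq] at hq
    have hn : n = rk D h (h q) := (Nat.cast_injective hq).symm
    subst hn
    -- rset of the compressed labelling at value `rk (h q)` is the image of
    -- rset of `h` at `h q` under `v ↦ ↑(rk v)`
    have himg : rset D (NBA.dacOrd D h) ((rk D h (h q) : ℕ) : ℕ∞) =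
        (fun v => ((rk D h v : ℕ) : ℕ∞)) '' rset D h (h q) := by
      ext v'
      constructor
      · rintro ⟨hle, hnt, p, hpD, rfl⟩
        have hhp : h p ≠ ⊤ := fun ht => hnt (dacOrd_eq_top D h ht)
        rw [dacOrd_eq_rk D h hhp] at hle ⊢
        have hrkle : rk D h (h p) ≤ rk D h (h q) := by rwa [Nat.cast_le] at hle
        have hple : h p ≤ h q := hord_le p q hhp hhq hrkle
        exact ⟨h p, ⟨hple, hhp, p, hpD, rfl⟩, rfl⟩
      · rintro ⟨v, ⟨hvle, hvt, p, hpD, rfl⟩, rfl⟩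
        refine ⟨?_, ENat.coe_ne_top _, p, hpD, ?_⟩
        · rw [Nat.cast_le]; exact rk_mono D h hvle
        · rw [dacOrd_eq_rk D h hvt]
    have hinjOn : Set.InjOn (fun v => ((rk D h v : ℕ) : ℕ∞)) (rset D h (h q)) := by
      intro x hx y hy hxy
      have hx' : x ∈ Vset D h := rset_subset_Vset D h _ hx
      have hy' : y ∈ Vset D h := rset_subset_Vset D h _ hy
      exact rk_inj_on D h hx' hy' (Nat.cast_injective hxy)
    show (rset D (NBA.dacOrd D h) ((rk D h (h q) : ℕ) : ℕ∞)).ncard = rk D h (h q)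
    rw [himg, Set.ncard_image_of_injOn hinjOn]
    rfl
end DacAux
namespace DacAux

variable {Q A : Type} [Fintype Q] [LinearOrder Q]
variable {M : NBA Q A} {D : Set Q} {S S' : Set Q} {a : A} {g : Q → ℕ∞}

lemma mem_dacImage_iff {q : Q} :
    q ∈ M.dacImage D S a ↔ q ∈ D ∧ ∃ p ∈ S ∩ D, q ∈ M.trans p a := Iff.rfl

/-- The inheritance set of values for the first branch of `dacPrime`. -/
def TSet (M : NBA Q A) (D S : Set Q) (a : A) (g : Q → ℕ∞) (q : Q) : Set ℕ∞ :=
  {v : ℕ∞ | ∃ p ∈ S ∩ D, q ∈ M.trans p a ∧ g p = v}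

lemma TSet_finite (q : Q) : (TSet M D S a g q).Finite := by
  apply Set.Finite.subset (Set.finite_range g)
  rintro v ⟨p, -, -, rfl⟩; exact ⟨p, rfl⟩

lemma sInf_TSet_mem {q : Q} (hq : q ∈ M.dacImage D S a) :
    sInf (TSet M D S a g q) ∈ TSet M D S a g q := by
  obtain ⟨-, p, hp, htr⟩ := hq
  exact Set.Nonempty.csInf_mem ⟨g p, p, hp, htr, rfl⟩ (TSet_finite q)

lemma dacPrime_of_image {q : Q} (hq : q ∈ M.dacImage D S a) :
    M.dacPrime D S S' a g q = sInf (TSet M D S a g q) := by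
  rw [NBA.dacPrime, if_pos hq]; rfl

lemma dacPrime_of_new {q : Q} (hq : q ∈ (S' ∩ D) \ M.dacImage D S a) :
    M.dacPrime D S S' a g q =
      ((D.ncard + Set.ncard {p | p ∈ (S' ∩ D) \ M.dacImage D S a ∧ p < q} + 1 : ℕ) : ℕ∞) := by
  rw [NBA.dacPrime, if_neg hq.2, if_pos hq]

section

variable (hfin : ∀ q, g q ≠ ⊤ ↔ q ∈ S ∩ D) (hS' : S' = M.stepSet S a)

include hfin in
lemma TSet_ne_top {q : Q} {v : ℕ∞} (hv : v ∈ TSet M D S a g q) : v ≠ ⊤ := by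
  obtain ⟨p, hp, -, rfl⟩ := hv
  exact (hfin p).mpr hp

include hS' in
lemma dacImage_subset : M.dacImage D S a ⊆ S' ∩ D := by
  rintro q ⟨hqD, p, hp, htr⟩
  exact ⟨hS' ▸ ⟨p, hp.1, htr⟩, hqD⟩

include hS' in
lemma dacPrime_of_out {q : Q} (hq : q ∉ S' ∩ D) :
    M.dacPrime D S S' a g q = ⊤ := by
  have him : q ∉ M.dacImage D S a := fun h => hq (dacImage_subset hS' h)
  rw [NBA.dacPrime, if_neg him, if_neg (fun h => hq h.1)]

include hfin hS' in
lemma dacPrime_top_iff {q : Q} :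
    M.dacPrime D S S' a g q = ⊤ ↔ q ∉ S' ∩ D := by
  constructor
  · intro h hq
    by_cases him : q ∈ M.dacImage D S a
    · rw [dacPrime_of_image him] at h
      exact TSet_ne_top hfin (sInf_TSet_mem him) h
    · rw [dacPrime_of_new ⟨hq, him⟩] at h
      exact (ENat.coe_ne_top _) h
  · exact dacPrime_of_out hS'

include hfin in
/-- Finite values of `dacPrime` that are `≤ |D|` are inherited from a state with the
same label, connected by a transition, and the label is minimal among predecessors. -/
lemma dacPrime_inherit {hG : Good D g} {q : Q} {n : ℕ}
    (hq : M.dacPrime D S S' a g q = (n : ℕ∞)) (hn : n ≤ D.ncard) :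
    q ∈ D ∧ ∃ p ∈ S ∩ D, g p = (n : ℕ∞) ∧ q ∈ M.trans p a ∧
      ∀ p' ∈ S ∩ D, q ∈ M.trans p' a → ((n : ℕ∞)) ≤ g p' := by
  by_cases him : q ∈ M.dacImage D S a
  · rw [dacPrime_of_image him] at hq
    obtain ⟨p, hp, htr, hgp⟩ := sInf_TSet_mem (g := g) him
    refine ⟨him.1, p, hp, by rw [hgp, hq], htr, ?_⟩
    intro p' hp' htr'
    rw [← hq]
    exact sInf_le ⟨p', hp', htr', rfl⟩
  · exfalso
    by_cases hq' : q ∈ S' ∩ D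
    · rw [dacPrime_of_new ⟨hq', him⟩] at hq
      have := Nat.cast_injective hq
      omega
    · rw [NBA.dacPrime, if_neg him, if_neg (fun h => hq' h.1)] at hq
      exact (ENat.coe_ne_top n) hq.symm

include hfin in
lemma dacPrime_succ_le {hG : Good D g} {p q : Q} (hp : p ∈ S ∩ D)
    (htr : q ∈ M.trans p a) (hqD : q ∈ D) :
    M.dacPrime D S S' a g q ≤ g p ∧ M.dacPrime D S S' a g q ≠ ⊤ := by
  have him : q ∈ M.dacImage D S a := ⟨hqD, p, hp, htr⟩
  rw [dacPrime_of_image him]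
  constructor
  · exact sInf_le ⟨p, hp, htr, rfl⟩
  · exact TSet_ne_top hfin (sInf_TSet_mem him)

include hfin hS' in
lemma preGood_dacPrime (hG : Good D g) (hdet : M.IsDeterministicSCC D) :
    PreGood D (M.dacPrime D S S' a g) := by
  constructor
  · intro q hq
    have hin : q ∈ S' ∩ D := by
      by_contra h
      exact hq (dacPrime_of_out hS' h)
    exact hin.2
  · -- injectivity
    intro p q heq hne
    have hpin : p ∈ S' ∩ D := by
      by_contra h; exact hne (dacPrime_of_out hS' h)
    have hqin : q ∈ S' ∩ D := by
      by_contra h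
      rw [heq] at hne
      exact hne (dacPrime_of_out hS' h)
    -- get the common finite value
    by_cases hpim : p ∈ M.dacImage D S a
    · have hv := dacPrime_of_image (S' := S') (g := g) hpim
      obtain ⟨p₀, hp₀, htr₀, hg₀⟩ := sInf_TSet_mem (g := g) hpim
      have hg₀ne : g p₀ ≠ ⊤ := (hfin p₀).mpr hp₀
      obtain ⟨n, hn1, hgn⟩ := hG.fin p₀ hg₀ne
      have hnD : n ≤ D.ncard := hG.val_le hgn
      have hpv : M.dacPrime D S S' a g p = (n : ℕ∞) := by rw [hv, ← hg₀, hgn]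
      have hqv : M.dacPrime D S S' a g q = (n : ℕ∞) := by rw [← heq, hpv]
      obtain ⟨hpD, p₁, hp₁, hg₁, htr₁, -⟩ := dacPrime_inherit hfin (hG := hG) hpv hnD
      obtain ⟨hqD, p₂, hp₂, hg₂, htr₂, -⟩ := dacPrime_inherit hfin (hG := hG) hqv hnD
      have hp12 : p₁ = p₂ := by
        apply hG.inj p₁ p₂ (by rw [hg₁, hg₂]) (by rw [hg₁]; exact ENat.coe_ne_top n)
      subst hp12
      exact hdet p₁ hp₁.2 a ⟨htr₁, hpD⟩ ⟨htr₂, hqD⟩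
    · -- p is new; then q is new too
      have hqim : q ∉ M.dacImage D S a := by
        intro hqim
        have hv := dacPrime_of_image (S' := S') (g := g) hqim
        obtain ⟨q₀, hq₀, htr₀, hg₀⟩ := sInf_TSet_mem (g := g) hqim
        have hg₀ne : g q₀ ≠ ⊤ := (hfin q₀).mpr hq₀
        obtain ⟨n, hn1, hgn⟩ := hG.fin q₀ hg₀ne
        have hnD : n ≤ D.ncard := hG.val_le hgn
        have hpv : M.dacPrime D S S' a g p = (n : ℕ∞) := by rw [heq, hv, ← hg₀, hgn]
        rw [dacPrime_of_new ⟨hpin, hpim⟩] at hpv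
        have := Nat.cast_injective hpv
        omega
      rw [dacPrime_of_new ⟨hpin, hpim⟩, dacPrime_of_new ⟨hqin, hqim⟩] at heq
      have hcnt : Set.ncard {r | r ∈ (S' ∩ D) \ M.dacImage D S a ∧ r < p} =
          Set.ncard {r | r ∈ (S' ∩ D) \ M.dacImage D S a ∧ r < q} := by
        have := Nat.cast_injective heq
        omega
      by_contra hpq
      rcases lt_or_gt_of_ne hpq with hlt | hgt
      · have : Set.ncard {r | r ∈ (S' ∩ D) \ M.dacImage D S a ∧ r < p} <
            Set.ncard {r | r ∈ (S' ∩ D) \ M.dacImage D S a ∧ r < q} := by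
          apply Set.ncard_lt_ncard _ (Set.toFinite _)
          constructor
          · rintro r ⟨hr, hrp⟩; exact ⟨hr, hrp.trans hlt⟩
          · intro hsub
            exact absurd ((hsub ⟨⟨hpin, hpim⟩, hlt⟩).2) (lt_irrefl p)
        omega
      · have : Set.ncard {r | r ∈ (S' ∩ D) \ M.dacImage D S a ∧ r < q} <
            Set.ncard {r | r ∈ (S' ∩ D) \ M.dacImage D S a ∧ r < p} := by
          apply Set.ncard_lt_ncard _ (Set.toFinite _)
          constructor
          · rintro r ⟨hr, hrq⟩; exact ⟨hr, hrq.trans hgt⟩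
          · intro hsub
            exact absurd ((hsub ⟨⟨hqin, hqim⟩, hgt⟩).2) (lt_irrefl q)
        omega
  · -- fin
    intro q hq
    by_cases him : q ∈ M.dacImage D S a
    · rw [dacPrime_of_image him]
      obtain ⟨p₀, hp₀, htr₀, hg₀⟩ := sInf_TSet_mem (g := g) him
      obtain ⟨n, hn1, hgn⟩ := hG.fin p₀ ((hfin p₀).mpr hp₀)
      exact ⟨n, hn1, by rw [← hg₀, hgn]⟩
    · have hqin : q ∈ S' ∩ D := by
        by_contra h; exact hq (dacPrime_of_out hS' h)
      rw [dacPrime_of_new ⟨hqin, him⟩]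
      exact ⟨_, by omega, rfl⟩

end
end DacAux
namespace DacAux

variable {Q A : Type} [Fintype Q] [LinearOrder Q]
variable (M : NBA Q A) (D : Set Q) (w : ℕ → A)

/-- The intermediate labelling `g'_{ℓ+1}` at step `ℓ`. -/
noncomputable def GP (ℓ : ℕ) : Q → ℕ∞ :=
  M.dacPrime D (M.reachSet w ℓ) (M.reachSet w (ℓ+1)) (w ℓ) (M.dacG D w ℓ)

lemma dacG_succ (ℓ : ℕ) : M.dacG D w (ℓ+1) = NBA.dacOrd D (GP M D w ℓ) := rfl

lemma reachSet_succ (ℓ : ℕ) :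
    M.reachSet w (ℓ+1) = M.stepSet (M.reachSet w ℓ) (w ℓ) := rfl

variable {M D w}

/-- The labelling functions of the DAC construction are good, and their finite
support is `S_ℓ ∩ D`. -/
lemma good_dacG (hdet : M.IsDeterministicSCC D) : ∀ ℓ : ℕ,
    Good D (M.dacG D w ℓ) ∧ (∀ q, M.dacG D w ℓ q ≠ ⊤ ↔ q ∈ M.reachSet w ℓ ∩ D) := by
  intro ℓ
  induction ℓ with
  | zero =>
    have hfin : ∀ q : Q, M.dacG D w 0 q ≠ ⊤ ↔ q ∈ M.reachSet w 0 ∩ D := by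
      intro q
      show (if q = M.init ∧ q ∈ D then (1:ℕ∞) else ⊤) ≠ ⊤ ↔ _
      by_cases hc : q = M.init ∧ q ∈ D
      · simp only [if_pos hc]
        constructor
        · intro _
          exact ⟨by rw [hc.1]; rfl, hc.2⟩
        · intro _; exact (by simp : (1:ℕ∞) ≠ ⊤)
      · simp only [if_neg hc]
        constructor
        · intro h; exact absurd rfl h
        · rintro ⟨hq1, hq2⟩
          exact absurd ⟨hq1, hq2⟩ hc
    refine ⟨⟨⟨?_, ?_, ?_⟩, ?_⟩, hfin⟩
    · intro q hq
      exact ((hfin q).mp hq).2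
    · intro p q hp hnp
      have h1 : p ∈ M.reachSet w 0 ∩ D := (hfin p).mp hnp
      have h2 : q ∈ M.reachSet w 0 ∩ D := (hfin q).mp (by rw [← hp]; exact hnp)
      have : p = M.init := h1.1
      have : q = M.init := h2.1
      simp [*]
    · intro q hq
      have h1 : q ∈ M.reachSet w 0 ∩ D := (hfin q).mp hq
      refine ⟨1, le_refl 1, ?_⟩
      show (if q = M.init ∧ q ∈ D then (1:ℕ∞) else ⊤) = ((1:ℕ):ℕ∞)
      rw [if_pos ⟨h1.1, h1.2⟩, Nat.cast_one]
    · -- rank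
      intro q n hq
      have hne : M.dacG D w 0 q ≠ ⊤ := by rw [hq]; exact ENat.coe_ne_top n
      have h1 : q ∈ M.reachSet w 0 ∩ D := (hfin q).mp hne
      have hval : M.dacG D w 0 q = (1:ℕ∞) := by
        show (if q = M.init ∧ q ∈ D then (1:ℕ∞) else ⊤) = 1
        rw [if_pos ⟨h1.1, h1.2⟩]
      have hn1 : n = 1 := by
        rw [hval] at hq
        exact_mod_cast hq.symm
      subst hn1
      have hrs : rset D (M.dacG D w 0) ((1:ℕ):ℕ∞) = {(1:ℕ∞)} := by
        ext v
        constructor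
        · rintro ⟨hv1, hvt, p, hpD, rfl⟩
          have hp : M.dacG D w 0 p ≠ ⊤ := hvt
          have h2 : p ∈ M.reachSet w 0 ∩ D := (hfin p).mp hp
          show M.dacG D w 0 p ∈ ({(1:ℕ∞)} : Set ℕ∞)
          rw [show M.dacG D w 0 p = (1:ℕ∞) from by
            show (if p = M.init ∧ p ∈ D then (1:ℕ∞) else ⊤) = 1
            rw [if_pos ⟨h2.1, h2.2⟩]]
          rfl
        · rintro rfl
          exact ⟨by rw [Nat.cast_one], (by simp : (1:ℕ∞) ≠ ⊤), q, h1.2, hval⟩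
      rw [rk, hrs, Set.ncard_singleton]
  | succ ℓ ih =>
    obtain ⟨hG, hfin⟩ := ih
    have hpre : PreGood D (GP M D w ℓ) :=
      preGood_dacPrime hfin (reachSet_succ M w ℓ) hG hdet
    refine ⟨Good_dacOrd hpre, ?_⟩
    intro q
    rw [dacG_succ, ne_eq, dacOrd_top_iff D (GP M D w ℓ)]
    constructor
    · intro h
      by_contra hq
      exact h (dacPrime_of_out (reachSet_succ M w ℓ) hq)
    · intro hq h
      have h' : M.dacPrime D (M.reachSet w ℓ) (M.reachSet w (ℓ+1)) (w ℓ) (M.dacG D w ℓ) q = ⊤ := h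
      rw [dacPrime_top_iff hfin (reachSet_succ M w ℓ)] at h'
      exact h' hq

end DacAux
namespace DacAux

variable {Q A : Type} [Fintype Q] [LinearOrder Q]
variable {M : NBA Q A} {D : Set Q} {w : ℕ → A}

section

variable (hdet : M.IsDeterministicSCC D)

include hdet

lemma GP_inherit {ℓ : ℕ} {q : Q} {n : ℕ} (hq : GP M D w ℓ q = (n : ℕ∞))
    (hn : n ≤ D.ncard) :
    q ∈ D ∧ ∃ p ∈ M.reachSet w ℓ ∩ D, M.dacG D w ℓ p = (n : ℕ∞) ∧ q ∈ M.trans p (w ℓ) := by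
  obtain ⟨hG, hfin⟩ := good_dacG (w := w) hdet ℓ
  obtain ⟨h1, p, hp, hgp, htr, -⟩ := dacPrime_inherit hfin (hG := hG) hq hn
  exact ⟨h1, p, hp, hgp, htr⟩

/-- Label monotonicity along a transition inside `D`. -/
lemma lab_mono_step {ℓ : ℕ} {p q : Q} {j : ℕ} (hp : M.dacG D w ℓ p = (j : ℕ∞))
    (htr : q ∈ M.trans p (w ℓ)) (hqD : q ∈ D) :
    ∃ i : ℕ, 1 ≤ i ∧ i ≤ j ∧ M.dacG D w (ℓ+1) q = (i : ℕ∞) := by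
  obtain ⟨hG, hfin⟩ := good_dacG (w := w) hdet ℓ
  have hpne : M.dacG D w ℓ p ≠ ⊤ := by rw [hp]; exact ENat.coe_ne_top j
  have hpSD : p ∈ M.reachSet w ℓ ∩ D := (hfin p).mp hpne
  have hjD : j ≤ D.ncard := hG.val_le hp
  obtain ⟨hle, hne⟩ :=
    dacPrime_succ_le (S' := M.reachSet w (ℓ+1)) hfin (hG := hG) hpSD htr hqD
  have hle' : GP M D w ℓ q ≤ (j : ℕ∞) := by rw [← hp]; exact hle
  have hne' : GP M D w ℓ q ≠ ⊤ := hne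
  lift GP M D w ℓ q to ℕ using hne' with u hu
  have huj : u ≤ j := by exact_mod_cast hle'
  -- the new label is the rank of `u` in the intermediate labelling
  have hord : M.dacG D w (ℓ+1) q = ((rk D (GP M D w ℓ) ((u : ℕ∞)) : ℕ) : ℕ∞) := by
    rw [dacG_succ]
    rw [dacOrd_eq_rk D (GP M D w ℓ) (by rw [← hu]; exact ENat.coe_ne_top u), ← hu]
  refine ⟨rk D (GP M D w ℓ) ((u : ℕ∞)), ?_, ?_, hord⟩
  · exact rk_pos D _ ⟨ENat.coe_ne_top u, q, hqD, hu.symm⟩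
  · -- rank is at most `j`
    have hsub : rset D (GP M D w ℓ) ((u : ℕ∞)) ⊆ rset D (M.dacG D w ℓ) ((j : ℕ∞)) := by
      rintro v ⟨hvle, hvt, p', hp'D, rfl⟩
      have hpre : PreGood D (GP M D w ℓ) :=
        preGood_dacPrime hfin (reachSet_succ M w ℓ) hG hdet
      obtain ⟨m, hm1, hm⟩ := hpre.fin p' hvt
      have hmu : m ≤ u := by rw [hm] at hvle; exact_mod_cast hvle
      obtain ⟨-, p₀, hp₀, hg₀, -⟩ := GP_inherit hdet hm (le_trans (hmu.trans huj) hjD)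
      refine ⟨?_, hvt, p₀, hp₀.2, hg₀.symm ▸ hm.symm ▸ rfl⟩
      rw [hm]
      exact_mod_cast hmu.trans huj
    calc rk D (GP M D w ℓ) ((u : ℕ∞))
        ≤ (rset D (M.dacG D w ℓ) ((j : ℕ∞))).ncard :=
          Set.ncard_le_ncard hsub (rset_finite _ _ _)
      _ = j := hG.rank p j hp

/-- When the label is preserved exactly, the intermediate value equals the label and
no smaller label vanishes. -/
lemma lab_eq_step {ℓ : ℕ} {p q : Q} {j : ℕ} (hp : M.dacG D w ℓ p = (j : ℕ∞))
    (htr : q ∈ M.trans p (w ℓ)) (hqD : q ∈ D)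
    (heq : M.dacG D w (ℓ+1) q = (j : ℕ∞)) :
    GP M D w ℓ q = (j : ℕ∞) ∧
      ∀ m : ℕ, 1 ≤ m → m ≤ j → (∃ p' ∈ D, M.dacG D w ℓ p' = (m : ℕ∞)) →
        ∃ p' ∈ D, GP M D w ℓ p' = (m : ℕ∞) := by
  obtain ⟨hG, hfin⟩ := good_dacG (w := w) hdet ℓ
  have hpne : M.dacG D w ℓ p ≠ ⊤ := by rw [hp]; exact ENat.coe_ne_top j
  have hpSD : p ∈ M.reachSet w ℓ ∩ D := (hfin p).mp hpne
  have hjD : j ≤ D.ncard := hG.val_le hp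
  obtain ⟨hle, hne⟩ :=
    dacPrime_succ_le (S' := M.reachSet w (ℓ+1)) hfin (hG := hG) hpSD htr hqD
  have hle' : GP M D w ℓ q ≤ (j : ℕ∞) := by rw [← hp]; exact hle
  lift GP M D w ℓ q to ℕ using hne with u hu
  have huj : u ≤ j := by exact_mod_cast hle'
  have hord : M.dacG D w (ℓ+1) q = ((rk D (GP M D w ℓ) ((u : ℕ∞)) : ℕ) : ℕ∞) := by
    rw [dacG_succ]
    rw [dacOrd_eq_rk D (GP M D w ℓ) (by rw [← hu]; exact ENat.coe_ne_top u), ← hu]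
  have hrkj : rk D (GP M D w ℓ) ((u : ℕ∞)) = j := by
    rw [hord] at heq; exact_mod_cast heq
  have hsub : rset D (GP M D w ℓ) ((u : ℕ∞)) ⊆ rset D (M.dacG D w ℓ) ((j : ℕ∞)) := by
    rintro v ⟨hvle, hvt, p', hp'D, rfl⟩
    have hpre : PreGood D (GP M D w ℓ) :=
      preGood_dacPrime hfin (reachSet_succ M w ℓ) hG hdet
    obtain ⟨m, hm1, hm⟩ := hpre.fin p' hvt
    have hmu : m ≤ u := by rw [hm] at hvle; exact_mod_cast hvle
    obtain ⟨-, p₀, hp₀, hg₀, -⟩ := GP_inherit hdet hm (le_trans (hmu.trans huj) hjD)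
    refine ⟨?_, hvt, p₀, hp₀.2, hg₀.symm ▸ hm.symm ▸ rfl⟩
    rw [hm]
    exact_mod_cast hmu.trans huj
  have hEq : rset D (GP M D w ℓ) ((u : ℕ∞)) = rset D (M.dacG D w ℓ) ((j : ℕ∞)) := by
    apply Set.eq_of_subset_of_ncard_le hsub _ (rset_finite _ _ _)
    show rk D (M.dacG D w ℓ) ((j:ℕ∞)) ≤ rk D (GP M D w ℓ) ((u:ℕ∞))
    rw [hG.rank p j hp, hrkj]
  constructor
  · -- `u = j`
    have hjmem : ((j:ℕ∞)) ∈ rset D (M.dacG D w ℓ) ((j : ℕ∞)) :=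
      ⟨le_rfl, ENat.coe_ne_top j, p, hpSD.2, hp⟩
    rw [← hEq] at hjmem
    have : ((j:ℕ∞)) ≤ ((u:ℕ∞)) := hjmem.1
    have hju : j ≤ u := by exact_mod_cast this
    have : u = j := le_antisymm huj hju
    exact Nat.cast_inj.mpr this
  · intro m hm1 hmj ⟨p', hp'D, hgp'⟩
    have : ((m:ℕ∞)) ∈ rset D (M.dacG D w ℓ) ((j : ℕ∞)) :=
      ⟨by exact_mod_cast hmj, ENat.coe_ne_top m, p', hp'D, hgp'⟩
    rw [← hEq] at this
    obtain ⟨-, -, p'', hp''D, hgp''⟩ := this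
    exact ⟨p'', hp''D, hgp''⟩

/-- If no label `≤ k` vanishes at step `ℓ` and `k` is a label at level `ℓ`, then any
state with intermediate value `k` gets label `k` at level `ℓ+1`. -/
lemma lab_stable_step {ℓ : ℕ} {k : ℕ} (hk : ∃ q, M.dacG D w ℓ q = (k : ℕ∞))
    (hnv : ∀ m : ℕ, 1 ≤ m → m ≤ k → (∃ p ∈ D, M.dacG D w ℓ p = (m : ℕ∞)) →
      ∃ p ∈ D, GP M D w ℓ p = (m : ℕ∞))
    {q' : Q} (hq' : GP M D w ℓ q' = (k : ℕ∞)) :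
    M.dacG D w (ℓ+1) q' = (k : ℕ∞) := by
  obtain ⟨hG, hfin⟩ := good_dacG (w := w) hdet ℓ
  obtain ⟨q, hq⟩ := hk
  have hkD : k ≤ D.ncard := hG.val_le hq
  have hpre : PreGood D (GP M D w ℓ) :=
    preGood_dacPrime hfin (reachSet_succ M w ℓ) hG hdet
  have hq'ne : GP M D w ℓ q' ≠ ⊤ := by rw [hq']; exact ENat.coe_ne_top k
  have hEq : rset D (GP M D w ℓ) ((k : ℕ∞)) = rset D (M.dacG D w ℓ) ((k : ℕ∞)) := by
    ext v
    constructor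
    · rintro ⟨hvle, hvt, p', hp'D, rfl⟩
      obtain ⟨m, hm1, hm⟩ := hpre.fin p' hvt
      have hmk : m ≤ k := by rw [hm] at hvle; exact_mod_cast hvle
      obtain ⟨-, p₀, hp₀, hg₀, -⟩ := GP_inherit hdet hm (hmk.trans hkD)
      exact ⟨hvle, hvt, p₀, hp₀.2, hg₀.symm ▸ hm.symm ▸ rfl⟩
    · rintro ⟨hvle, hvt, p', hp'D, rfl⟩
      obtain ⟨m, hm1, hm⟩ := hG.fin p' hvt
      have hmk : m ≤ k := by rw [hm] at hvle; exact_mod_cast hvle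
      obtain ⟨p'', hp''D, hgp''⟩ := hnv m hm1 hmk ⟨p', hp'D, hm⟩
      exact ⟨hm ▸ hvle, hvt, p'', hp''D, hgp''.symm ▸ hm ▸ rfl⟩
  have hord : M.dacG D w (ℓ+1) q' = ((rk D (GP M D w ℓ) ((k : ℕ∞)) : ℕ) : ℕ∞) := by
    rw [dacG_succ, dacOrd_eq_rk D (GP M D w ℓ) hq'ne, hq']
  rw [hord, show rk D (GP M D w ℓ) ((k:ℕ∞)) = (rset D (GP M D w ℓ) ((k:ℕ∞))).ncard from rfl,
    hEq]
  rw [show (rset D (M.dacG D w ℓ) ((k:ℕ∞))).ncard = rk D (M.dacG D w ℓ) ((k:ℕ∞)) from rfl,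
    hG.rank q k hq]

end
end DacAux
namespace DacAux

variable {Q A : Type} [Fintype Q] [LinearOrder Q]
variable (M : NBA Q A) (D : Set Q) (w : ℕ → A)

/-- The set `B(e)` of the step from level `ℓ`. -/
def BS (ℓ : ℕ) : Set ℕ :=
  insert (D.ncard + 1)
    {n : ℕ | (∃ q ∈ D, M.dacG D w ℓ q = (n : ℕ∞)) ∧ ¬ ∃ q ∈ D, GP M D w ℓ q = (n : ℕ∞)}

/-- The set `G(e)` of the step from level `ℓ`. -/
def GS (ℓ : ℕ) : Set ℕ :=
  insert (D.ncard + 1)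
    {n : ℕ | ∃ q q' : Q, (q, w ℓ, q') ∈ M.acc ∧ M.dacG D w ℓ q = (n : ℕ∞) ∧
      GP M D w ℓ q' = (n : ℕ∞)}

lemma dacColor_eq (ℓ : ℕ) :
    M.dacColor D w ℓ = min (2 * sInf (BS M D w ℓ) - 1) (2 * sInf (GS M D w ℓ)) := rfl

variable {M D w}

lemma sInf_BS_le (ℓ : ℕ) : sInf (BS M D w ℓ) ≤ D.ncard + 1 :=
  Nat.sInf_le (Set.mem_insert _ _)

lemma sInf_GS_le (ℓ : ℕ) : sInf (GS M D w ℓ) ≤ D.ncard + 1 :=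
  Nat.sInf_le (Set.mem_insert _ _)

lemma dacColor_le (ℓ : ℕ) : M.dacColor D w ℓ ≤ 2 * D.ncard + 1 := by
  rw [dacColor_eq]
  have := sInf_BS_le (M := M) (D := D) (w := w) ℓ
  have h2 : 2 * sInf (BS M D w ℓ) - 1 ≤ 2 * D.ncard + 1 := by omega
  exact le_trans (min_le_left _ _) h2

section
variable (hdet : M.IsDeterministicSCC D)
include hdet

lemma sInf_BS_pos (ℓ : ℕ) : 1 ≤ sInf (BS M D w ℓ) := by
  rcases Nat.sInf_mem (⟨D.ncard + 1, Set.mem_insert _ _⟩ : (BS M D w ℓ).Nonempty) with h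
  rcases h with h | h
  · omega
  · obtain ⟨⟨q, hqD, hq⟩, -⟩ := h
    obtain ⟨hG, -⟩ := good_dacG (w := w) hdet ℓ
    obtain ⟨m, hm1, hm⟩ := hG.fin q (by rw [hq]; exact ENat.coe_ne_top _)
    rw [hq] at hm
    have := Nat.cast_injective hm
    omega

lemma sInf_GS_pos (ℓ : ℕ) : 1 ≤ sInf (GS M D w ℓ) := by
  rcases Nat.sInf_mem (⟨D.ncard + 1, Set.mem_insert _ _⟩ : (GS M D w ℓ).Nonempty) with h
  rcases h with h | h
  · omega
  · obtain ⟨q, q', -, hq, -⟩ := h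
    obtain ⟨hG, -⟩ := good_dacG (w := w) hdet ℓ
    obtain ⟨m, hm1, hm⟩ := hG.fin q (by rw [hq]; exact ENat.coe_ne_top _)
    rw [hq] at hm
    have := Nat.cast_injective hm
    omega

lemma dacColor_pos (ℓ : ℕ) : 1 ≤ M.dacColor D w ℓ := by
  rw [dacColor_eq]
  have h1 := sInf_BS_pos hdet (w := w) ℓ
  have h2 := sInf_GS_pos hdet (w := w) ℓ
  omega

/-- If the color of step `ℓ` is at least `2k`, no label `≤ k` vanishes. -/
lemma noVanish_of_color_ge {ℓ k : ℕ} (hk : 1 ≤ k) (hc : 2 * k ≤ M.dacColor D w ℓ) :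
    ∀ m : ℕ, 1 ≤ m → m ≤ k → (∃ p ∈ D, M.dacG D w ℓ p = (m : ℕ∞)) →
      ∃ p ∈ D, GP M D w ℓ p = (m : ℕ∞) := by
  intro m hm1 hmk hw
  by_contra hng
  have hmem : m ∈ BS M D w ℓ := Set.mem_insert_of_mem _ ⟨hw, hng⟩
  have h1 : sInf (BS M D w ℓ) ≤ m := Nat.sInf_le hmem
  rw [dacColor_eq] at hc
  have h2 : min (2 * sInf (BS M D w ℓ) - 1) (2 * sInf (GS M D w ℓ)) ≤
      2 * sInf (BS M D w ℓ) - 1 := min_le_left _ _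
  omega

omit hdet in
/-- A lower bound on `sInf B` from no-vanishing. -/
lemma sInf_BS_ge {ℓ k : ℕ} (hkd : k ≤ D.ncard)
    (hnv : ∀ m : ℕ, 1 ≤ m → m ≤ k → (∃ p ∈ D, M.dacG D w ℓ p = (m : ℕ∞)) →
      ∃ p ∈ D, GP M D w ℓ p = (m : ℕ∞))
    (hpos : ∀ m : ℕ, (∃ p ∈ D, M.dacG D w ℓ p = (m : ℕ∞)) → 1 ≤ m) :
    k + 1 ≤ sInf (BS M D w ℓ) := by
  apply le_csInf ⟨D.ncard + 1, Set.mem_insert _ _⟩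
  rintro n (rfl | ⟨hwit, hng⟩)
  · omega
  · by_contra hlt
    push_neg at hlt
    exact hng (hnv n (hpos n hwit) (by omega) hwit)

omit hdet in
lemma dacColor_le_of_witness {ℓ k : ℕ}
    (hw : ∃ q q' : Q, (q, w ℓ, q') ∈ M.acc ∧ M.dacG D w ℓ q = (k : ℕ∞) ∧
      GP M D w ℓ q' = (k : ℕ∞)) :
    M.dacColor D w ℓ ≤ 2 * k := by
  have h1 : sInf (GS M D w ℓ) ≤ k := Nat.sInf_le (Set.mem_insert_of_mem _ hw)
  rw [dacColor_eq]
  have := min_le_right (2 * sInf (BS M D w ℓ) - 1) (2 * sInf (GS M D w ℓ))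
  omega

omit hdet in
/-- If `sInf B > k` and the color is at most `2k`, the color is even. -/
lemma dacColor_even_of {ℓ k : ℕ} (hB : k + 1 ≤ sInf (BS M D w ℓ))
    (hc : M.dacColor D w ℓ ≤ 2 * k) : Even (M.dacColor D w ℓ) := by
  rw [dacColor_eq] at hc ⊢
  rcases min_cases (2 * sInf (BS M D w ℓ) - 1) (2 * sInf (GS M D w ℓ)) with
    ⟨h1, h2⟩ | ⟨h1, h2⟩
  · omega
  · rw [h1]; exact even_two_mul _

/-- If the color of step `ℓ` is exactly `2k` with `1 ≤ k ≤ |D|`, there is an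
accepting transition witnessed at label `k`. -/
lemma witness_of_color_eq {ℓ k : ℕ} (hk : 1 ≤ k) (hkd : k ≤ D.ncard)
    (hc : M.dacColor D w ℓ = 2 * k) :
    ∃ q q' : Q, (q, w ℓ, q') ∈ M.acc ∧ M.dacG D w ℓ q = (k : ℕ∞) ∧
      GP M D w ℓ q' = (k : ℕ∞) := by
  rw [dacColor_eq] at hc
  have hodd : 2 * sInf (BS M D w ℓ) - 1 ≠ 2 * k := by
    have := sInf_BS_pos hdet (w := w) ℓ
    omega
  have hG : 2 * sInf (GS M D w ℓ) = 2 * k := by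
    rcases min_cases (2 * sInf (BS M D w ℓ) - 1) (2 * sInf (GS M D w ℓ)) with
      ⟨h1, h2⟩ | ⟨h1, h2⟩
    · omega
    · omega
  have hGk : sInf (GS M D w ℓ) = k := by omega
  have hmem : k ∈ GS M D w ℓ := by
    rw [← hGk]
    exact Nat.sInf_mem ⟨D.ncard + 1, Set.mem_insert _ _⟩
  rcases hmem with h | h
  · omega
  · exact h

end

/-- Pigeonhole: if `f` is infinitely often at most `B`, some value `≤ B` occurs
infinitely often. -/
lemma exists_inf_often_le {f : ℕ → ℕ} {B : ℕ} (h : ∀ n, ∃ ℓ ≥ n, f ℓ ≤ B) :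
    ∃ c ≤ B, ∀ n, ∃ ℓ ≥ n, f ℓ = c := by
  by_contra hc
  push_neg at hc
  have hc' : ∀ c : ℕ, ∃ n, c ≤ B → ∀ ℓ ≥ n, f ℓ ≠ c := by
    intro c
    by_cases hcB : c ≤ B
    · obtain ⟨n, hn⟩ := hc c hcB
      exact ⟨n, fun _ => hn⟩
    · exact ⟨0, fun h => absurd h hcB⟩
  choose F hF using hc'
  obtain ⟨ℓ, hℓN, hℓB⟩ := h ((Finset.range (B + 1)).sup F)
  refine hF (f ℓ) hℓB ℓ ?_ rfl
  calc F (f ℓ) ≤ (Finset.range (B + 1)).sup F :=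
        Finset.le_sup (Finset.mem_range.mpr (by omega))
    _ ≤ ℓ := hℓN

/-- Values below the infimum of the set of infinitely occurring values occur only
finitely often. -/
lemma eventually_sInf_le (f : ℕ → ℕ) :
    ∃ N, ∀ ℓ ≥ N, sInf {c : ℕ | ∀ n, ∃ i ≥ n, f i = c} ≤ f ℓ := by
  set s := sInf {c : ℕ | ∀ n, ∃ i ≥ n, f i = c} with hs
  have hnot : ∀ c : ℕ, ∃ n, c < s → ∀ i ≥ n, f i ≠ c := by
    intro c
    by_cases hcs : c < s
    · have hcI : c ∉ {c : ℕ | ∀ n, ∃ i ≥ n, f i = c} := by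
        intro hmem
        have := Nat.sInf_le hmem
        omega
      simp only [Set.mem_setOf_eq, not_forall] at hcI
      obtain ⟨n, hn⟩ := hcI
      push_neg at hn
      exact ⟨n, fun _ => hn⟩
    · exact ⟨0, fun h => absurd h hcs⟩
  choose F hF using hnot
  by_cases hs0 : s = 0
  · exact ⟨0, fun ℓ _ => by omega⟩
  refine ⟨(Finset.range s).sup F, fun ℓ hℓ => ?_⟩
  by_contra hlt
  push_neg at hlt
  exact hF (f ℓ) hlt ℓ (le_trans (Finset.le_sup (Finset.mem_range.mpr hlt)) hℓ) rfl

/-- A non-increasing sequence of naturals is eventually constant. -/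
lemma eventually_const_of_antitone {j : ℕ → ℕ} (h : ∀ n, j (n + 1) ≤ j n) :
    ∃ N k, ∀ n ≥ N, j n = k := by
  have hmono : ∀ m n, m ≤ n → j n ≤ j m := by
    intro m n hmn
    induction n, hmn using Nat.le_induction with
    | base => exact le_rfl
    | succ n hmn ih => exact le_trans (h n) ih
  obtain ⟨N, hN⟩ := Nat.sInf_mem (⟨j 0, 0, rfl⟩ : (Set.range j).Nonempty)
  refine ⟨N, j N, fun n hn => le_antisymm (hmono N n hn) ?_⟩
  rw [hN]
  exact Nat.sInf_le ⟨n, rfl⟩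

lemma run_mem_reachSet {ρ : ℕ → Q} (hρ : M.IsRun w ρ) (ℓ : ℕ) :
    ρ ℓ ∈ M.reachSet w ℓ := by
  induction ℓ with
  | zero => rw [hρ.1]; rfl
  | succ ℓ ih => exact ⟨ρ ℓ, ih, hρ.2 ℓ⟩

lemma reach_run_prefix {q : Q} {ℓ : ℕ} (hq : q ∈ M.reachSet w ℓ) :
    ∃ ρ : ℕ → Q, ρ 0 = M.init ∧ (∀ i < ℓ, ρ (i + 1) ∈ M.trans (ρ i) (w i)) ∧ ρ ℓ = q := by
  induction ℓ generalizing q with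
  | zero =>
    refine ⟨fun _ => q, hq, fun i hi => absurd hi (Nat.not_lt_zero i), rfl⟩
  | succ ℓ ih =>
    obtain ⟨p, hp, htr⟩ := hq
    obtain ⟨ρ, h0, hstep, hend⟩ := ih hp
    refine ⟨fun i => if i ≤ ℓ then ρ i else q, by simp [h0], ?_, by simp⟩
    intro i hi
    rcases Nat.lt_succ_iff_lt_or_eq.mp hi with hlt | rfl
    · simp only [if_pos (Nat.le_of_lt hlt), if_pos (Nat.succ_le_of_lt hlt)]
      exact hstep i hlt
    · simp only [if_pos (le_refl i), if_neg (Nat.not_succ_le_self i), hend]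
      exact htr

end DacAux
namespace DacAux

variable {Q A : Type} [Fintype Q] [LinearOrder Q]
variable {M : NBA Q A} {D : Set Q} {w : ℕ → A}

section
variable (hdet : M.IsDeterministicSCC D)
include hdet

lemma lab_pos {ℓ : ℕ} : ∀ m : ℕ, (∃ p ∈ D, M.dacG D w ℓ p = (m : ℕ∞)) → 1 ≤ m := by
  rintro m ⟨p, hpD, hp⟩
  obtain ⟨hG, -⟩ := good_dacG (w := w) hdet ℓ
  obtain ⟨m', hm1, hm'⟩ := hG.fin p (by rw [hp]; exact ENat.coe_ne_top m)
  rw [hp] at hm'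
  have := Nat.cast_injective hm'
  omega

/-- From a state with stable label `k`, there is a `k`-labelled successor. -/
lemma step_exists {ℓ k : ℕ}
    (hnv : ∀ m : ℕ, 1 ≤ m → m ≤ k → (∃ p ∈ D, M.dacG D w ℓ p = (m : ℕ∞)) →
      ∃ p ∈ D, GP M D w ℓ p = (m : ℕ∞))
    {x : Q} (hx : M.dacG D w ℓ x = (k : ℕ∞)) (hk1 : 1 ≤ k) :
    ∃ r, r ∈ M.trans x (w ℓ) ∧ r ∈ D ∧ M.dacG D w (ℓ + 1) r = (k : ℕ∞) := by
  obtain ⟨hG, hfin⟩ := good_dacG (w := w) hdet ℓ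
  have hxne : M.dacG D w ℓ x ≠ ⊤ := by rw [hx]; exact ENat.coe_ne_top k
  have hxSD := (hfin x).mp hxne
  have hkd : k ≤ D.ncard := hG.val_le hx
  obtain ⟨p, hpD, hGPp⟩ := hnv k hk1 le_rfl ⟨x, hxSD.2, hx⟩
  obtain ⟨-, p₀, hp₀, hg₀, htr⟩ := GP_inherit hdet hGPp hkd
  have hp₀x : p₀ = x := hG.inj p₀ x (hg₀.trans hx.symm)
    (by rw [hg₀]; exact ENat.coe_ne_top k)
  subst hp₀x
  exact ⟨p, htr, hpD, lab_stable_step hdet ⟨p₀, hx⟩ hnv hGPp⟩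

/-- Uniqueness of the state carrying a given label. -/
lemma lab_unique {ℓ k : ℕ} {x y : Q} (hx : M.dacG D w ℓ x = (k : ℕ∞))
    (hy : M.dacG D w ℓ y = (k : ℕ∞)) : x = y := by
  obtain ⟨hG, -⟩ := good_dacG (w := w) hdet ℓ
  exact hG.inj x y (hx.trans hy.symm) (by rw [hx]; exact ENat.coe_ne_top k)

/-- Forward direction. -/
lemma forward {ρ : ℕ → Q} (hρ : M.IsAcceptingRun w ρ) {N : ℕ}
    (hN : ∀ n ≥ N, ρ n ∈ D) :
    Even (sInf {c : ℕ | ∀ n : ℕ, ∃ ℓ ≥ n, M.dacColor D w ℓ = c}) := by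
  obtain ⟨hrun, hacc⟩ := hρ
  have hSρ : ∀ ℓ, ρ ℓ ∈ M.reachSet w ℓ := run_mem_reachSet hrun
  have hne : ∀ ℓ ≥ N, M.dacG D w ℓ (ρ ℓ) ≠ ⊤ := by
    intro ℓ hℓ
    exact ((good_dacG (w := w) hdet ℓ).2 (ρ ℓ)).mpr ⟨hSρ ℓ, hN ℓ hℓ⟩
  set j : ℕ → ℕ := fun n => (M.dacG D w (N + n) (ρ (N + n))).toNat with hjdef
  have hj : ∀ n, M.dacG D w (N + n) (ρ (N + n)) = ((j n : ℕ) : ℕ∞) := by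
    intro n
    exact (ENat.coe_toNat (hne (N + n) (Nat.le_add_right N n))).symm
  have hjmono : ∀ n, j (n + 1) ≤ j n := by
    intro n
    obtain ⟨i, hi1, hij, hival⟩ := lab_mono_step hdet (hj n) (hrun.2 (N + n))
      (hN (N + n + 1) (by omega))
    have : M.dacG D w (N + (n + 1)) (ρ (N + (n + 1))) = ((i : ℕ) : ℕ∞) := hival
    rw [hj (n + 1)] at this
    have := Nat.cast_injective this
    omega
  obtain ⟨N₁, k, hstab⟩ := eventually_const_of_antitone hjmono
  have hk1 : 1 ≤ k := by
    obtain ⟨hG, -⟩ := good_dacG (w := w) hdet (N + N₁)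
    obtain ⟨m, hm1, hm⟩ := hG.fin (ρ (N + N₁)) (hne (N + N₁) (by omega))
    rw [hj N₁] at hm
    have := Nat.cast_injective hm
    have := hstab N₁ le_rfl
    omega
  have hgk : ∀ ℓ ≥ N + N₁, M.dacG D w ℓ (ρ ℓ) = ((k : ℕ) : ℕ∞) := by
    intro ℓ hℓ
    have h1 : ℓ = N + (N₁ + (ℓ - (N + N₁))) := by omega
    rw [h1]
    rw [hj (N₁ + (ℓ - (N + N₁))), hstab (N₁ + (ℓ - (N + N₁))) (by omega)]
  have hkd : k ≤ D.ncard :=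
    (good_dacG (w := w) hdet (N + N₁)).1.val_le (hgk (N + N₁) le_rfl)
  -- stable-phase facts
  have hmain : ∀ ℓ ≥ N + N₁,
      GP M D w ℓ (ρ (ℓ + 1)) = ((k : ℕ) : ℕ∞) ∧
      k + 1 ≤ sInf (BS M D w ℓ) := by
    intro ℓ hℓ
    obtain ⟨ha, hb⟩ := lab_eq_step hdet (hgk ℓ hℓ) (hrun.2 ℓ)
      (hN (ℓ + 1) (by omega)) (hgk (ℓ + 1) (by omega))
    exact ⟨ha, sInf_BS_ge hkd hb (lab_pos hdet)⟩
  -- colors ≤ 2k occur infinitely often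
  have hinf : ∀ n, ∃ ℓ ≥ n, M.dacColor D w ℓ ≤ 2 * k := by
    intro n
    obtain ⟨ℓ, hℓ, hatrans⟩ := hacc (max n (N + N₁))
    refine ⟨ℓ, le_trans (le_max_left _ _) hℓ, ?_⟩
    apply dacColor_le_of_witness
    exact ⟨ρ ℓ, ρ (ℓ + 1), hatrans, hgk ℓ (le_trans (le_max_right _ _) hℓ),
      (hmain ℓ (le_trans (le_max_right _ _) hℓ)).1⟩
  obtain ⟨c, hcle, hcI⟩ := exists_inf_often_le hinf
  set I := {c : ℕ | ∀ n : ℕ, ∃ ℓ ≥ n, M.dacColor D w ℓ = c} with hI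
  have hIne : I.Nonempty := ⟨c, hcI⟩
  have hsle : sInf I ≤ 2 * k := le_trans (Nat.sInf_le hcI) hcle
  obtain ⟨ℓ, hℓ, hℓc⟩ := Nat.sInf_mem hIne (N + N₁)
  rw [← hℓc]
  exact dacColor_even_of (hmain ℓ hℓ).2 (by omega)

end
end DacAux
namespace DacAux

variable {Q A : Type} [Fintype Q] [LinearOrder Q]

/-- The tail of the run built by following the label `k` from state `q'` at level `s`. -/
noncomputable def tailRun (M : NBA Q A) (D : Set Q) (w : ℕ → A) (k s : ℕ) (q' : Q) :
    ℕ → Q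
  | 0 => q'
  | n + 1 =>
      if h : ∃ r, r ∈ M.trans (tailRun M D w k s q' n) (w (s + n)) ∧ r ∈ D ∧
          M.dacG D w (s + n + 1) r = (k : ℕ∞) then h.choose else M.init

variable {M : NBA Q A} {D : Set Q} {w : ℕ → A}

section
variable (hdet : M.IsDeterministicSCC D)
include hdet

lemma tailRun_lab {k s : ℕ} {q' : Q}
    (hstart : M.dacG D w s q' = (k : ℕ∞)) (hk1 : 1 ≤ k)
    (hnv : ∀ ℓ ≥ s, ∀ m : ℕ, 1 ≤ m → m ≤ k →
      (∃ p ∈ D, M.dacG D w ℓ p = (m : ℕ∞)) → ∃ p ∈ D, GP M D w ℓ p = (m : ℕ∞)) :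
    ∀ n, M.dacG D w (s + n) (tailRun M D w k s q' n) = (k : ℕ∞) := by
  intro n
  induction n with
  | zero => exact hstart
  | succ n ih =>
    have hex : ∃ r, r ∈ M.trans (tailRun M D w k s q' n) (w (s + n)) ∧ r ∈ D ∧
        M.dacG D w (s + n + 1) r = (k : ℕ∞) :=
      step_exists hdet (hnv (s + n) (by omega)) ih hk1
    show M.dacG D w (s + (n + 1)) (tailRun M D w k s q' (n + 1)) = (k : ℕ∞)
    rw [tailRun, dif_pos hex]
    exact hex.choose_spec.2.2

lemma tailRun_step {k s : ℕ} {q' : Q}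
    (hstart : M.dacG D w s q' = (k : ℕ∞)) (hk1 : 1 ≤ k)
    (hnv : ∀ ℓ ≥ s, ∀ m : ℕ, 1 ≤ m → m ≤ k →
      (∃ p ∈ D, M.dacG D w ℓ p = (m : ℕ∞)) → ∃ p ∈ D, GP M D w ℓ p = (m : ℕ∞)) :
    ∀ n, tailRun M D w k s q' (n + 1) ∈ M.trans (tailRun M D w k s q' n) (w (s + n)) := by
  intro n
  have hex : ∃ r, r ∈ M.trans (tailRun M D w k s q' n) (w (s + n)) ∧ r ∈ D ∧
      M.dacG D w (s + n + 1) r = (k : ℕ∞) :=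
    step_exists hdet (hnv (s + n) (by omega)) (tailRun_lab hdet hstart hk1 hnv n) hk1
  rw [tailRun, dif_pos hex]
  exact hex.choose_spec.1

/-- Backward direction. -/
lemma backward
    (heven : Even (sInf {c : ℕ | ∀ n : ℕ, ∃ ℓ ≥ n, M.dacColor D w ℓ = c})) :
    ∃ ρ : ℕ → Q, M.IsAcceptingRun w ρ ∧ ∃ N : ℕ, ∀ n ≥ N, ρ n ∈ D := by
  set I := {c : ℕ | ∀ n : ℕ, ∃ ℓ ≥ n, M.dacColor D w ℓ = c} with hIdef
  have hIne : I.Nonempty := by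
    obtain ⟨c, -, hc⟩ := exists_inf_often_le (f := M.dacColor D w) (B := 2 * D.ncard + 1)
      (fun n => ⟨n, le_rfl, dacColor_le n⟩)
    exact ⟨c, hc⟩
  have hcI : sInf I ∈ I := Nat.sInf_mem hIne
  have hub : sInf I ≤ 2 * D.ncard + 1 := by
    obtain ⟨ℓ, -, hℓ⟩ := hcI 0
    rw [← hℓ]
    exact dacColor_le ℓ
  have hpos : 1 ≤ sInf I := by
    obtain ⟨ℓ, -, hℓ⟩ := hcI 0
    rw [← hℓ]
    exact dacColor_pos hdet ℓ
  obtain ⟨k, hk⟩ := heven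
  have hk1 : 1 ≤ k := by omega
  have hkd : k ≤ D.ncard := by omega
  obtain ⟨N₀, hN₀'⟩ := eventually_sInf_le (M.dacColor D w)
  have hN₀ : ∀ ℓ ≥ N₀, sInf I ≤ M.dacColor D w ℓ := hN₀'
  have hnv : ∀ ℓ ≥ N₀, ∀ m : ℕ, 1 ≤ m → m ≤ k →
      (∃ p ∈ D, M.dacG D w ℓ p = (m : ℕ∞)) → ∃ p ∈ D, GP M D w ℓ p = (m : ℕ∞) := by
    intro ℓ hℓ
    apply noVanish_of_color_ge hdet hk1
    have := hN₀ ℓ hℓ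
    omega
  obtain ⟨ℓ₀, hℓ₀, hcℓ₀⟩ := hcI N₀
  obtain ⟨q, q', hqacc, hq, hq'⟩ := witness_of_color_eq hdet hk1 hkd
    (show M.dacColor D w ℓ₀ = 2 * k by omega)
  have hstart : M.dacG D w (ℓ₀ + 1) q' = (k : ℕ∞) :=
    lab_stable_step hdet ⟨q, hq⟩ (hnv ℓ₀ hℓ₀) hq'
  have hnv' : ∀ ℓ ≥ ℓ₀ + 1, ∀ m : ℕ, 1 ≤ m → m ≤ k →
      (∃ p ∈ D, M.dacG D w ℓ p = (m : ℕ∞)) → ∃ p ∈ D, GP M D w ℓ p = (m : ℕ∞) :=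
    fun ℓ hℓ => hnv ℓ (by omega)
  -- run prefix to `q'`
  have hq'S : q' ∈ M.reachSet w (ℓ₀ + 1) :=
    (((good_dacG (w := w) hdet (ℓ₀ + 1)).2 q').mp
      (by rw [hstart]; exact ENat.coe_ne_top k)).1
  obtain ⟨pre, hpre0, hprestep, hpreend⟩ := reach_run_prefix hq'S
  set T := tailRun M D w k (ℓ₀ + 1) q' with hTdef
  have hTlab := tailRun_lab hdet hstart hk1 hnv'
  have hTstep := tailRun_step hdet hstart hk1 hnv'
  set ρ : ℕ → Q := fun n => if n < ℓ₀ + 1 then pre n else T (n - (ℓ₀ + 1)) with hρdef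
  have hρlab : ∀ n ≥ ℓ₀ + 1, M.dacG D w n (ρ n) = (k : ℕ∞) := by
    intro n hn
    have h1 : ρ n = T (n - (ℓ₀ + 1)) := by
      simp only [hρdef, if_neg (show ¬ n < ℓ₀ + 1 by omega)]
    rw [h1]
    have := hTlab (n - (ℓ₀ + 1))
    rwa [show ℓ₀ + 1 + (n - (ℓ₀ + 1)) = n by omega] at this
  have hρrun : M.IsRun w ρ := by
    constructor
    · simp only [hρdef, if_pos (show 0 < ℓ₀ + 1 by omega), hpre0]
    · intro n
      rcases lt_trichotomy (n + 1) (ℓ₀ + 1) with hlt | heq | hgt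
      · simp only [hρdef, if_pos hlt, if_pos (show n < ℓ₀ + 1 by omega)]
        exact hprestep n (by omega)
      · have h1 : ρ n = pre n := by
          simp only [hρdef, if_pos (show n < ℓ₀ + 1 by omega)]
        have h2 : ρ (n + 1) = T 0 := by
          simp only [hρdef, if_neg (show ¬ n + 1 < ℓ₀ + 1 by omega)]
          rw [show n + 1 - (ℓ₀ + 1) = 0 by omega]
        rw [h1, h2]
        have : T 0 = q' := rfl
        rw [this, ← hpreend, ← heq]
        · exact hprestep n (by omega)
      · have h1 : ρ n = T (n - (ℓ₀ + 1)) := by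
          simp only [hρdef, if_neg (show ¬ n < ℓ₀ + 1 by omega)]
        have h2 : ρ (n + 1) = T (n - (ℓ₀ + 1) + 1) := by
          simp only [hρdef, if_neg (show ¬ n + 1 < ℓ₀ + 1 by omega)]
          rw [show n + 1 - (ℓ₀ + 1) = n - (ℓ₀ + 1) + 1 by omega]
        rw [h1, h2]
        have := hTstep (n - (ℓ₀ + 1))
        rwa [show ℓ₀ + 1 + (n - (ℓ₀ + 1)) = n by omega] at this
  refine ⟨ρ, ⟨hρrun, ?_⟩, ℓ₀ + 1, ?_⟩
  · -- accepting transitions infinitely often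
    intro n
    obtain ⟨ℓ, hℓ, hℓc⟩ := hcI (max n (ℓ₀ + 1))
    have hℓ1 : ℓ ≥ ℓ₀ + 1 := le_trans (le_max_right _ _) hℓ
    have hℓN₀ : ℓ ≥ N₀ := by omega
    obtain ⟨q₁, q₁', hacc₁, hq₁, hq₁'⟩ := witness_of_color_eq hdet hk1 hkd
      (show M.dacColor D w ℓ = 2 * k by omega)
    have he1 : q₁ = ρ ℓ := lab_unique hdet hq₁ (hρlab ℓ hℓ1)
    have hg1' : M.dacG D w (ℓ + 1) q₁' = (k : ℕ∞) :=
      lab_stable_step hdet ⟨ρ ℓ, hρlab ℓ hℓ1⟩ (hnv ℓ hℓN₀) hq₁'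
    have he2 : q₁' = ρ (ℓ + 1) := lab_unique hdet hg1' (hρlab (ℓ + 1) (by omega))
    refine ⟨ℓ, le_trans (le_max_left _ _) hℓ, ?_⟩
    rw [← he1, ← he2]
    exact hacc₁
  · -- eventually in `D`
    intro n hn
    exact (((good_dacG (w := w) hdet n).2 (ρ n)).mp
      (by rw [hρlab n hn]; exact ENat.coe_ne_top k)).2

end
end DacAux

/-- There is an accepting run of `M` over `w` eventually staying in
the DAC `D` iff the minimal color occurring infinitely often in the color sequence
of the DAC construction for `D` is even. -/
theorem dac_accepting_iff_min_infinite_color_even {Q A : Type}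
    [Fintype Q] [LinearOrder Q] [Finite A]
    (M : NBA Q A) (D : Set Q) (hD : M.IsDAC D) (w : ℕ → A) :
    (∃ ρ : ℕ → Q, M.IsAcceptingRun w ρ ∧ ∃ N : ℕ, ∀ n ≥ N, ρ n ∈ D) ↔
      Even (sInf {c : ℕ | ∀ n : ℕ, ∃ ℓ ≥ n, M.dacColor D w ℓ = c}) := by
  have hdet : M.IsDeterministicSCC D := hD.2.2.1
  constructor
  · rintro ⟨ρ, hρ, N, hN⟩
    exact DacAux.forward hdet hρ hN
  · exact DacAux.backward hdet
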